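/- arXiv:math/0010167 — 6 statements merged into one kernel-verified Lean document; each statement's English description precedes it below -/
import Mathlib

section
/- Fix a linear order on [n]. The collection nbb(G) of nbb sets of a matroid G is a simplicial complex (i.e., closed under taking subsets) which contains nbc(G) as a subcomplex. -/
/-- A set `S` is line-closed in the matroid `M` if it contains the closure of
each pair of its elements. -/
def IsLineClosed {n : ℕ} (M : Matroid (Fin n)) (S : Set (Fin n)) : Prop :=
  ∀ i ∈ S, ∀ j ∈ S, M.closure {i, j} ⊆ S

/-- The line-closure of `S`: the intersection of all line-closed sets containing `S`. -/
def lineClosure {n : ℕ} (M : Matroid (Fin n)) (S : Set (Fin n)) : Set (Fin n) :=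
  ⋂₀ {T | S ⊆ T ∧ IsLineClosed M T}

/-- We encode a linear ordering of `[n]` by a permutation `π`: the element `i` comes
before `j` when `π i ≤ π j`.  `IsMinWrt π S m` says `m` is the minimum of `S` for this
ordering. -/
def IsMinWrt {n : ℕ} (π : Equiv.Perm (Fin n)) (S : Set (Fin n)) (m : Fin n) : Prop :=
  m ∈ S ∧ ∀ j ∈ S, π m ≤ π j

/-- `S` is an nbb set for the linear order `π`: each element is the minimum of the
line-closure of the set of its successors (itself included) in `S`. -/
def IsNbb {n : ℕ} (M : Matroid (Fin n)) (π : Equiv.Perm (Fin n))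
    (S : Finset (Fin n)) : Prop :=
  ∀ i ∈ S, IsMinWrt π (lineClosure M {j | j ∈ S ∧ π i ≤ π j}) i

/-- `S` is an nbc set for the linear order `π` (Björner's characterization): each
element is the minimum of the matroid closure of the set of its successors in `S`. -/
def IsNbc {n : ℕ} (M : Matroid (Fin n)) (π : Equiv.Perm (Fin n))
    (S : Finset (Fin n)) : Prop :=
  ∀ i ∈ S, IsMinWrt π (M.closure {j | j ∈ S ∧ π i ≤ π j}) i

/-- For any fixed linear order, the nbb sets form a simplicial complex containing
the nbc complex. -/
theorem nbb_simplicialComplex_contains_nbc {n : ℕ} (M : Matroid (Fin n))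
    (hE : M.E = Set.univ) (π : Equiv.Perm (Fin n)) :
    (∀ S T : Finset (Fin n), T ⊆ S → IsNbb M π S → IsNbb M π T) ∧
    (∀ S : Finset (Fin n), IsNbc M π S → IsNbb M π S) := by
  have hsub : ∀ A : Set (Fin n), A ⊆ lineClosure M A := by
    intro A x hx T hT
    exact hT.1 hx
  have hmono : ∀ A B : Set (Fin n), A ⊆ B → lineClosure M A ⊆ lineClosure M B := by
    intro A B hAB x hx T hT
    exact hx T ⟨hAB.trans hT.1, hT.2⟩
  have hle : ∀ A : Set (Fin n), lineClosure M A ⊆ M.closure A := by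
    intro A x hx
    refine hx (M.closure A) ⟨M.subset_closure A (by rw [hE]; exact Set.subset_univ _), ?_⟩
    intro i hi j hj
    have : M.closure {i, j} ⊆ M.closure (M.closure A) := by
      apply M.closure_subset_closure
      intro z hz
      rcases hz with rfl | hz
      · exact hi
      · simpa using hz ▸ hj
    simpa using this
  constructor
  · intro S T hTS hS i hiT
    have hiS : i ∈ S := hTS hiT
    refine ⟨hsub _ ⟨hiT, le_refl _⟩, ?_⟩
    intro j hj
    have hss : ({j | j ∈ T ∧ π i ≤ π j} : Set (Fin n)) ⊆ {j | j ∈ S ∧ π i ≤ π j} :=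
      fun z hz => ⟨hTS hz.1, hz.2⟩
    exact (hS i hiS).2 j (hmono _ _ hss hj)
  · intro S hS i hiS
    refine ⟨hsub _ ⟨hiS, le_refl _⟩, fun j hj => (hS i hiS).2 j (hle _ hj)⟩
end

section
/- For any fixed linear order on [n], a set S of atoms is nbb in G if and only if S is an NBB set in the lattice of line-closed sets of G with atoms ordered by the given linear order. Here a set T is bounded below iff there exists i ∈ ℓc(T) with i < min(T), and S is NBB iff no subset of S is bounded below. -/
/-- `T` is bounded below (for the linear order `π`): `T` is nonempty and some element
of its line-closure strictly precedes every element of `T` (i.e. precedes `min T`). -/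
def IsBoundedBelow {n : ℕ} (M : Matroid (Fin n)) (π : Equiv.Perm (Fin n))
    (T : Finset (Fin n)) : Prop :=
  T.Nonempty ∧ ∃ a ∈ lineClosure M ↑T, ∀ t ∈ T, π a < π t

/-- `S` is NBB: no subset of `S` is bounded below. -/
def IsNBB {n : ℕ} (M : Matroid (Fin n)) (π : Equiv.Perm (Fin n))
    (S : Finset (Fin n)) : Prop :=
  ∀ T ⊆ S, ¬ IsBoundedBelow M π T

lemma subset_lineClosure' {n : ℕ} (M : Matroid (Fin n)) (S : Set (Fin n)) :
    S ⊆ lineClosure M S := fun x hx T hT => hT.1 hx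

lemma lineClosure_mono' {n : ℕ} (M : Matroid (Fin n)) {A B : Set (Fin n)}
    (h : A ⊆ B) : lineClosure M A ⊆ lineClosure M B :=
  fun x hx T hT => hx T ⟨h.trans hT.1, hT.2⟩

/-- A set is nbb iff it is an NBB set (in the sense of Blass--Sagan) of the lattice of
line-closed sets, for the given linear order on the atoms. -/
theorem nbb_iff_NBB {n : ℕ} (M : Matroid (Fin n)) (hE : M.E = Set.univ)
    (π : Equiv.Perm (Fin n)) (S : Finset (Fin n)) :
    IsNbb M π S ↔ IsNBB M π S := by
  constructor
  · rintro hnbb T hTS ⟨hTne, a, ha, hlt⟩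
    obtain ⟨i, hiT, hmin⟩ := T.exists_min_image (fun j => π j) hTne
    have hi : i ∈ S := hTS hiT
    have hsub : (↑T : Set (Fin n)) ⊆ {j | j ∈ S ∧ π i ≤ π j} :=
      fun t ht => ⟨hTS ht, hmin t ht⟩
    have ha' := lineClosure_mono' M hsub ha
    exact absurd (hlt i hiT) (not_lt.2 ((hnbb i hi).2 a ha'))
  · intro hNBB i hi
    refine ⟨subset_lineClosure' M _ ⟨hi, le_refl _⟩, ?_⟩
    intro a ha
    by_contra h
    push_neg at h
    set T := S.filter (fun j => π i ≤ π j) with hT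
    have hcoe : (↑T : Set (Fin n)) = {j | j ∈ S ∧ π i ≤ π j} := by
      ext x; simp [hT]
    apply hNBB T (Finset.filter_subset _ _)
    refine ⟨⟨i, Finset.mem_filter.2 ⟨hi, le_refl _⟩⟩, a, ?_, ?_⟩
    · rw [hcoe]; exact ha
    · intro t ht
      exact lt_of_lt_of_le h (Finset.mem_filter.1 ht).2
end

section
/- If the Orlik-Solomon algebra A(G) of a simple matroid G is quadratic (i.e., the surjection Ā(G) → A(G) from the quadratic closure is an isomorphism), then G is line-closed. -/
/-- The generator `e i` of the exterior algebra on `e₁, …, eₙ`. -/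
noncomputable def gen (K : Type*) [CommRing K] {n : ℕ} (i : Fin n) :
    ExteriorAlgebra K (Fin n → K) :=
  ExteriorAlgebra.ι K (Pi.single i 1)

/-- The monomial `e_{i₁} ∧ ⋯ ∧ e_{i_p}` indexed by a list. -/
noncomputable def eProd (K : Type*) [CommRing K] {n : ℕ} (l : List (Fin n)) :
    ExteriorAlgebra K (Fin n → K) :=
  (l.map (gen K)).prod

/-- The boundary `∂ e_S = Σ (-1)^{k-1} e_{S - i_k}` of the monomial indexed by a list. -/
noncomputable def bdryL (K : Type*) [CommRing K] {n : ℕ} (l : List (Fin n)) :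
    ExteriorAlgebra K (Fin n → K) :=
  ∑ k : Fin l.length, ((-1 : K) ^ (k : ℕ)) • eProd K (l.eraseIdx k)

/-- The monomial `e_S` for a finite set `S`, listed in increasing order. -/
noncomputable def eS (K : Type*) [CommRing K] {n : ℕ} (S : Finset (Fin n)) :
    ExteriorAlgebra K (Fin n → K) :=
  eProd K (S.sort (· ≤ ·))

/-- The boundary `∂ e_S` for a finite set `S`, listed in increasing order. -/
noncomputable def bdryS (K : Type*) [CommRing K] {n : ℕ} (S : Finset (Fin n)) :
    ExteriorAlgebra K (Fin n → K) :=
  bdryL K (S.sort (· ≤ ·))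

/-- The quadratic part `𝒥` of the Orlik–Solomon ideal: the (two-sided) ideal of the
exterior algebra generated by the boundaries of dependent 3-element sets, as a
`K`-submodule. -/
noncomputable def OSJ (K : Type*) [CommRing K] {n : ℕ} (M : Matroid (Fin n)) :
    Submodule K (ExteriorAlgebra K (Fin n → K)) :=
  Submodule.span K {z | ∃ x y : ExteriorAlgebra K (Fin n → K), ∃ S : Finset (Fin n),
    S.card = 3 ∧ M.Dep ↑S ∧ z = x * bdryS K S * y}

/-- The Orlik–Solomon ideal `ℐ`: the (two-sided) ideal generated by the boundaries of
all dependent sets, as a `K`-submodule. -/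
noncomputable def OSI (K : Type*) [CommRing K] {n : ℕ} (M : Matroid (Fin n)) :
    Submodule K (ExteriorAlgebra K (Fin n → K)) :=
  Submodule.span K {z | ∃ x y : ExteriorAlgebra K (Fin n → K), ∃ S : Finset (Fin n), M.Dep ↑S ∧ z = x * bdryS K S * y}

open ExteriorAlgebra in
lemma ι_triple_zero {K : Type*} [CommRing K] {n : ℕ} {a b c : Fin n → K}
    (h : a = b ∨ a = c ∨ b = c) :
    ι K b * ι K c - ι K a * ι K c + ι K a * ι K b = 0 := by
  rcases h with h | h | h <;> subst h
  · simp [ι_sq_zero]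
  · rw [ι_sq_zero, sub_zero]
    exact ι_add_mul_swap b a
  · simp [ι_sq_zero]

lemma bdryL_triple (K : Type*) [CommRing K] {n : ℕ} (r s t : Fin n) :
    bdryL K [r, s, t] = gen K s * gen K t - gen K r * gen K t + gen K r * gen K s := by
  have : ∑ k : Fin ([r,s,t].length), ((-1 : K) ^ (k : ℕ)) • eProd K ([r,s,t].eraseIdx k)
      = gen K s * gen K t - gen K r * gen K t + gen K r * gen K s := by
    rw [show ([r,s,t] : List (Fin n)).length = 3 from rfl, Fin.sum_univ_three]
    simp [eProd, List.eraseIdx, pow_succ, sub_eq_add_neg, mul_assoc]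
  exact this

lemma sort_three {n : ℕ} {T : Finset (Fin n)} (h : T.card = 3) :
    ∃ r s t : Fin n, r ≠ s ∧ r ≠ t ∧ s ≠ t ∧ T.sort (· ≤ ·) = [r, s, t] ∧
      (T : Set (Fin n)) = {r, s, t} := by
  have hlen : (T.sort (· ≤ ·)).length = 3 := by rw [Finset.length_sort, h]
  obtain ⟨r, s, t, hl⟩ := List.length_eq_three.mp hlen
  have hnd := T.sort_nodup (· ≤ ·)
  rw [hl] at hnd
  simp only [List.nodup_cons, List.mem_cons, List.not_mem_nil, or_false,
    List.mem_singleton, List.nodup_nil, and_true, not_or] at hnd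
  refine ⟨r, s, t, hnd.1.1, hnd.1.2, hnd.2.1, hl, ?_⟩
  ext x
  rw [Finset.mem_coe, ← Finset.mem_sort (· ≤ ·), hl]
  simp [Set.mem_insert_iff]

lemma apply_osj_eq_zero {K : Type*} [Field K] {n : ℕ} {M : Matroid (Fin n)}
    {B : Type*} [Ring B] [Algebra K B]
    (F : ExteriorAlgebra K (Fin n → K) →ₐ[K] B)
    (hF : ∀ T : Finset (Fin n), T.card = 3 → M.Dep (T : Set (Fin n)) → F (bdryS K T) = 0)
    {z : ExteriorAlgebra K (Fin n → K)} (hz : z ∈ OSJ K M) : F z = 0 := by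
  induction hz using Submodule.span_induction with
  | mem x h =>
    obtain ⟨u, v, T, hcard, hdep, rfl⟩ := h
    rw [map_mul, map_mul, hF T hcard hdep, mul_zero, zero_mul]
  | zero => exact map_zero F
  | add x y _ _ hx hy => rw [map_add, hx, hy, add_zero]
  | smul c x _ hx => rw [map_smul, hx, smul_zero]

lemma eProd_ne_zero {K : Type*} [Field K] {n : ℕ} {m : List (Fin n)} (hm : m.Nodup) :
    eProd K m ≠ 0 := by
  classical
  intro h0
  let c : (Fin n → K) →ₗ[K] (Fin m.length → K) := LinearMap.funLeft K K m.get
  let A : (Fin n → K) [⋀^Fin m.length]→ₗ[K] K := (Matrix.detRowAlternating).compLinearMap c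
  let f : ∀ i : ℕ, (Fin n → K) [⋀^Fin i]→ₗ[K] K :=
    Function.update (fun _ => 0) m.length A
  have h1 : eProd K m = ExteriorAlgebra.ιMulti K m.length (fun i => Pi.single (m.get i) 1) := by
    rw [ExteriorAlgebra.ιMulti_apply]
    unfold eProd
    conv_lhs => rw [← List.ofFn_get m, List.map_ofFn]
    rfl
  have h2 := ExteriorAlgebra.liftAlternating_apply_ιMulti (R := K) f
    (fun i => Pi.single (m.get i) 1)
  rw [← h1, h0, map_zero] at h2
  have hfA : f m.length = A := Function.update_self _ _ _
  rw [hfA] at h2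
  have h3 : A (fun i => Pi.single (m.get i) 1) = 1 := by
    rw [AlternatingMap.compLinearMap_apply]
    have hmat : (fun i => c (Pi.single (m.get i) 1))
        = (1 : Matrix (Fin m.length) (Fin m.length) K) := by
      funext i j
      simp only [c, LinearMap.funLeft_apply, Function.comp]
      by_cases hij : i = j
      · subst hij; simp [Matrix.one_apply_eq]
      · rw [Matrix.one_apply_ne hij, Pi.single_apply, if_neg]
        intro hget
        exact hij ((hm.get_inj_iff).mp hget.symm).symm.symm
    rw [hmat]
    exact Matrix.det_one
  rw [h3] at h2
  exact one_ne_zero h2.symm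

lemma map_eProd (K : Type*) [Field K] {n : ℕ} (f : (Fin n → K) →ₗ[K] (Fin n → K))
    (l : List (Fin n)) :
    ExteriorAlgebra.map f (eProd K l)
      = (l.map fun i => ExteriorAlgebra.ι K (f (Pi.single i 1))).prod := by
  induction l with
  | nil => simp [eProd]
  | cons i l ih =>
    rw [eProd, List.map_cons, List.prod_cons, map_mul, List.map_cons, List.prod_cons, ← ih]
    rw [eProd, gen, ExteriorAlgebra.map_apply_ι]

set_option maxHeartbeats 1600000 in
/-- If the Orlik–Solomon algebra `A(G) = ℰ/ℐ` of a simple matroid is quadratic, i.e.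
`ℐ = 𝒥` so that the surjection `Ā(G) → A(G)` is an isomorphism, then `G` is
line-closed. -/
theorem lineClosed_of_quadratic (K : Type*) [Field K] {n : ℕ} (M : Matroid (Fin n))
    (hE : M.E = Set.univ) (hsimple : ∀ i j : Fin n, i ≠ j → M.Indep {i, j})
    (hquad : OSI K M = OSJ K M) :
    ∀ S : Set (Fin n), IsLineClosed M S → M.closure S = S := by
  classical
  intro S hS
  have hSE : S ⊆ M.E := by rw [hE]; exact Set.subset_univ S
  refine subset_antisymm ?_ (M.subset_closure S hSE)
  by_contra hcon
  obtain ⟨a, haS, ha⟩ := Set.not_subset.mp hcon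
  obtain ⟨I, hI⟩ := M.exists_isBasis S hSE
  have hIE : I ⊆ M.E := by rw [hE]; exact Set.subset_univ I
  have hacl : a ∈ M.closure I := by rw [hI.closure_eq_closure]; exact haS
  have haE : a ∈ M.E := by rw [hE]; trivial
  -- any element of a dependent triple is in the closure of the other two
  have hpair : ∀ x y z : Fin n, x ≠ y → z ∉ ({x, y} : Set (Fin n)) →
      M.Dep {x, y, z} → z ∈ M.closure {x, y} := by
    intro x y z hxy hz hdep
    have hxyI : M.Indep {x, y} := hsimple x y hxy
    by_contra hzc
    have hind : M.Indep (insert z {x, y}) := by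
      rw [hxyI.insert_indep_iff_of_notMem hz]
      exact ⟨by rw [hE]; trivial, hzc⟩
    have he : ({x, y, z} : Set (Fin n)) = insert z {x, y} := by
      ext u; simp only [Set.mem_insert_iff, Set.mem_singleton_iff]; tauto
    rw [Matroid.dep_iff, he] at hdep
    exact hdep.1 hind
  -- I is nonempty (otherwise a is a loop and 1 ∈ OSJ, a contradiction via the counit)
  have hIne : I.Nonempty := by
    rw [Set.nonempty_iff_ne_empty]
    rintro rfl
    have hdep1 : M.Dep {a} := by
      rw [Matroid.dep_iff]
      refine ⟨fun hind => ?_, by rw [hE]; exact Set.subset_univ _⟩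
      have h2 := hind.notMem_closure_diff_of_mem (Set.mem_singleton a)
      rw [Set.diff_self] at h2
      exact h2 hacl
    have h1 : bdryS K ({a} : Finset (Fin n)) = 1 := by
      unfold bdryS
      rw [Finset.sort_singleton]
      unfold bdryL
      simp [eProd]
    have hmem : (1 : ExteriorAlgebra K (Fin n → K)) ∈ OSJ K M := by
      rw [← hquad]
      exact Submodule.subset_span ⟨1, 1, {a}, by simpa using hdep1,
        by rw [h1, one_mul, mul_one]⟩
    have hcounit : ∀ T : Finset (Fin n), T.card = 3 → M.Dep (T : Set (Fin n)) →
        ExteriorAlgebra.algebraMapInv (bdryS K T) = (0 : K) := by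
      intro T hcard hdep
      obtain ⟨r, s, t, _, _, _, hsort, _⟩ := sort_three hcard
      unfold bdryS
      rw [hsort, bdryL_triple]
      have hz : ∀ i : Fin n, ExteriorAlgebra.algebraMapInv (gen K i) = (0 : K) := by
        intro i
        simp [ExteriorAlgebra.algebraMapInv, gen, ExteriorAlgebra.lift_ι_apply]
      simp only [map_add, map_sub, map_mul, hz, mul_zero, zero_mul]
      ring
    have h0 := apply_osj_eq_zero (M := M) ExteriorAlgebra.algebraMapInv hcounit hmem
    rw [map_one] at h0
    exact one_ne_zero h0
  obtain ⟨Jf, hJf⟩ : ∃ Jf : Finset (Fin n), (Jf : Set (Fin n)) = I :=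
    ⟨(Set.toFinite I).toFinset, Set.Finite.coe_toFinset _⟩
  have hJfne : Jf.Nonempty := Finset.coe_nonempty.mp (by rw [hJf]; exact hIne)
  -- the filtration function φ
  let Tset : Fin n → Finset (Fin n) := fun j =>
    Finset.univ.filter fun x => x ∈ I ∧ j ∈ M.closure (I ∩ Set.Iic x)
  have hTmem : ∀ j x, x ∈ Tset j ↔ x ∈ I ∧ j ∈ M.closure (I ∩ Set.Iic x) := by
    intro j x
    simp only [Tset, Finset.mem_filter, Finset.mem_univ, true_and]
  have hTne : ∀ j, j ∈ M.closure I → (Tset j).Nonempty := by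
    intro j hj
    have hxmI : Jf.max' hJfne ∈ I := by
      rw [← hJf]
      exact Finset.mem_coe.mpr (Jf.max'_mem hJfne)
    have hII : I ∩ Set.Iic (Jf.max' hJfne) = I := by
      apply Set.inter_eq_self_of_subset_left
      intro y hy
      exact Jf.le_max' y (by rw [← Finset.mem_coe, hJf]; exact hy)
    exact ⟨Jf.max' hJfne, (hTmem j _).mpr ⟨hxmI, by rwa [hII]⟩⟩
  let φ : Fin n → Fin n := fun j => if h : (Tset j).Nonempty then (Tset j).min' h else a
  have hφmem : ∀ j, (Tset j).Nonempty → φ j ∈ I ∧ j ∈ M.closure (I ∩ Set.Iic (φ j)) := by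
    intro j h
    have h2 := (Tset j).min'_mem h
    rw [hTmem] at h2
    simpa only [φ, dif_pos h] using h2
  have hφle : ∀ j, (Tset j).Nonempty → ∀ x, x ∈ I → j ∈ M.closure (I ∩ Set.Iic x) →
      φ j ≤ x := by
    intro j h x hx hcl
    have h2 : x ∈ Tset j := (hTmem j x).mpr ⟨hx, hcl⟩
    simpa only [φ, dif_pos h] using (Tset j).min'_le x h2
  have hφfix : ∀ x, x ∈ I → φ x = x := by
    intro x hx
    have hxcl : x ∈ M.closure I := M.mem_closure_of_mem hx hIE
    have hne := hTne x hxcl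
    have hxmem : x ∈ M.closure (I ∩ Set.Iic x) :=
      M.mem_closure_of_mem ⟨hx, le_refl x⟩ (fun y hy => hIE hy.1)
    have hle : φ x ≤ x := hφle x hne x hx hxmem
    refine le_antisymm hle ?_
    by_contra hxle
    have hlt : φ x < x := not_le.mp hxle
    have hmem2 := (hφmem x hne).2
    have hsub : I ∩ Set.Iic (φ x) ⊆ I \ {x} := by
      rintro y ⟨hyI, hy⟩
      refine ⟨hyI, fun hyx => absurd hy ?_⟩
      rw [Set.mem_singleton_iff] at hyx
      subst hyx
      exact not_le.mpr hlt
    have := M.closure_subset_closure hsub hmem2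
    exact hI.indep.notMem_closure_diff_of_mem hx this
  have hφcl : ∀ u v j, (Tset u).Nonempty → (Tset v).Nonempty → j ∈ M.closure {u, v} →
      φ j ≤ max (φ u) (φ v) := by
    intro u v j hu hv hj
    have hmI : max (φ u) (φ v) ∈ I := by
      rcases max_choice (φ u) (φ v) with h | h <;> rw [h]
      exacts [(hφmem u hu).1, (hφmem v hv).1]
    have hum : u ∈ M.closure (I ∩ Set.Iic (max (φ u) (φ v))) :=
      M.closure_subset_closure
        (Set.inter_subset_inter_right I (Set.Iic_subset_Iic.mpr (le_max_left _ _)))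
        (hφmem u hu).2
    have hvm : v ∈ M.closure (I ∩ Set.Iic (max (φ u) (φ v))) :=
      M.closure_subset_closure
        (Set.inter_subset_inter_right I (Set.Iic_subset_Iic.mpr (le_max_right _ _)))
        (hφmem v hv).2
    have hpairsub : ({u, v} : Set (Fin n)) ⊆ M.closure (I ∩ Set.Iic (max (φ u) (φ v))) := by
      intro x hx
      rcases hx with rfl | hx
      · exact hum
      · rw [Set.mem_singleton_iff] at hx; subst hx; exact hvm
    have hjm : j ∈ M.closure (I ∩ Set.Iic (max (φ u) (φ v))) :=
      M.closure_subset_closure_of_subset_closure hpairsub hj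
    have hne : (Tset j).Nonempty := ⟨max (φ u) (φ v), (hTmem j _).mpr ⟨hmI, hjm⟩⟩
    exact hφle j hne _ hmI hjm
  -- the linear map and the induced algebra map
  let w : Fin n → (Fin n → K) := fun j => if j ∈ S then Pi.single (φ j) (1 : K) else 0
  let f : (Fin n → K) →ₗ[K] (Fin n → K) := (Pi.basisFun K (Fin n)).constr K w
  have hf : ∀ i, f (Pi.single i 1) = w i := by
    intro i
    have hb : (Pi.single i 1 : Fin n → K) = Pi.basisFun K (Fin n) i :=
      (Pi.basisFun_apply K (Fin n) i).symm
    rw [hb]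
    exact Module.Basis.constr_basis _ K w i
  have hFgen : ∀ i, ExteriorAlgebra.map f (gen K i) = ExteriorAlgebra.ι K (w i) := by
    intro i; rw [gen, ExteriorAlgebra.map_apply_ι, hf]
  have hTneS : ∀ j, j ∈ S → (Tset j).Nonempty := fun j hj => hTne j (hI.subset_closure hj)
  -- the induced algebra map kills all quadratic boundaries
  have hkill : ∀ T : Finset (Fin n), T.card = 3 → M.Dep (T : Set (Fin n)) →
      ExteriorAlgebra.map f (bdryS K T) = 0 := by
    intro T h3 hdep
    obtain ⟨r, s, t, hrs, hrt, hst, hsort, hTset⟩ := sort_three h3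
    unfold bdryS
    rw [hsort, bdryL_triple]
    simp only [map_add, map_sub, map_mul, hFgen]
    apply ι_triple_zero
    rw [hTset] at hdep
    have htin : t ∉ ({r, s} : Set (Fin n)) := by
      intro hmem
      rcases hmem with h | h
      · exact hrt h.symm
      · exact hst (Set.mem_singleton_iff.mp h).symm
    have hsin : s ∉ ({r, t} : Set (Fin n)) := by
      intro hmem
      rcases hmem with h | h
      · exact hrs h.symm
      · exact hst (Set.mem_singleton_iff.mp h)
    have hrin : r ∉ ({s, t} : Set (Fin n)) := by
      intro hmem
      rcases hmem with h | h
      · exact hrs h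
      · exact hrt (Set.mem_singleton_iff.mp h)
    have hdep2 : M.Dep {r, t, s} := by
      have he : ({r, t, s} : Set (Fin n)) = {r, s, t} := by
        ext u; simp only [Set.mem_insert_iff, Set.mem_singleton_iff]; tauto
      rwa [he]
    have hdep3 : M.Dep {s, t, r} := by
      have he : ({s, t, r} : Set (Fin n)) = {r, s, t} := by
        ext u; simp only [Set.mem_insert_iff, Set.mem_singleton_iff]; tauto
      rwa [he]
    by_cases hr : r ∈ S <;> by_cases hs : s ∈ S <;> by_cases ht : t ∈ S
    · -- all three in S : two values of φ agree
      have hct : t ∈ M.closure {r, s} := hpair r s t hrs htin hdep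
      have hcs : s ∈ M.closure {r, t} := hpair r t s hrt hsin hdep2
      have hcr : r ∈ M.closure {s, t} := hpair s t r hst hrin hdep3
      have h1 : φ t ≤ max (φ r) (φ s) := hφcl r s t (hTneS r hr) (hTneS s hs) hct
      have h2 : φ r ≤ max (φ s) (φ t) := hφcl s t r (hTneS s hs) (hTneS t ht) hcr
      have h3' : φ s ≤ max (φ r) (φ t) := hφcl r t s (hTneS r hr) (hTneS t ht) hcs
      have hphi : φ r = φ s ∨ φ r = φ t ∨ φ s = φ t := by
        by_contra hne
        push_neg at hne
        obtain ⟨n1, n2, n3⟩ := hne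
        rcases le_total (φ r) (φ s) with hh | hh
        · have hlt1 : φ r < φ s := lt_of_le_of_ne hh n1
          have hh2 : φ s ≤ φ t := by
            rcases le_max_iff.mp h3' with h' | h'
            · exact absurd h' (not_le.mpr hlt1)
            · exact h'
          have hlt2 : φ s < φ t := lt_of_le_of_ne hh2 n3
          rcases le_max_iff.mp h1 with h' | h'
          · exact absurd h' (not_le.mpr (hlt1.trans hlt2))
          · exact absurd h' (not_le.mpr hlt2)
        · have hlt1 : φ s < φ r := lt_of_le_of_ne hh (Ne.symm n1)
          have hh2 : φ r ≤ φ t := by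
            rcases le_max_iff.mp h2 with h' | h'
            · exact absurd h' (not_le.mpr hlt1)
            · exact h'
          have hlt2 : φ r < φ t := lt_of_le_of_ne hh2 n2
          rcases le_max_iff.mp h1 with h' | h'
          · exact absurd h' (not_le.mpr hlt2)
          · exact absurd h' (not_le.mpr (hlt1.trans hlt2))
      rcases hphi with h | h | h
      · left; simp only [w, if_pos hr, if_pos hs, h]
      · right; left; simp only [w, if_pos hr, if_pos ht, h]
      · right; right; simp only [w, if_pos hs, if_pos ht, h]
    · -- r, s ∈ S, t ∉ S : impossible by line-closedness
      have hct : t ∈ M.closure {r, s} := hpair r s t hrs htin hdep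
      exact absurd (hS r hr s hs hct) ht
    · -- r, t ∈ S, s ∉ S : impossible
      have hcs : s ∈ M.closure {r, t} := hpair r t s hrt hsin hdep2
      exact absurd (hS r hr t ht hcs) hs
    · -- only r ∈ S : w s = w t = 0
      right; right; simp only [w, if_neg hs, if_neg ht]
    · -- s, t ∈ S, r ∉ S : impossible
      have hcr : r ∈ M.closure {s, t} := hpair s t r hst hrin hdep3
      exact absurd (hS s hs t ht hcr) hr
    · -- only s ∈ S
      right; left; simp only [w, if_neg hr, if_neg ht]
    · -- only t ∈ S
      left; simp only [w, if_neg hr, if_neg hs]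
    · left; simp only [w, if_neg hr, if_neg hs]
  -- the dependent set C = insert a I
  have hCcoe : ((insert a Jf : Finset (Fin n)) : Set (Fin n)) = insert a I := by
    rw [Finset.coe_insert, hJf]
  have hCdep : M.Dep ((insert a Jf : Finset (Fin n)) : Set (Fin n)) := by
    rw [hCcoe, Matroid.dep_iff]
    refine ⟨fun hind => ?_, by rw [hE]; exact Set.subset_univ _⟩
    rw [hI.indep.insert_indep_iff] at hind
    rcases hind with h | h
    · exact h.2 hacl
    · exact ha (hI.subset h)
  have hmemJ : bdryS K (insert a Jf) ∈ OSJ K M := by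
    rw [← hquad]
    have hgen : bdryS K (insert a Jf) ∈ {z | ∃ x y : ExteriorAlgebra K (Fin n → K),
        ∃ S' : Finset (Fin n), M.Dep ↑S' ∧ z = x * bdryS K S' * y} :=
      ⟨1, 1, insert a Jf, hCdep, by rw [one_mul, mul_one]⟩
    exact Submodule.subset_span hgen
  have hF0 : ExteriorAlgebra.map f (bdryS K (insert a Jf)) = 0 :=
    apply_osj_eq_zero _ hkill hmemJ
  -- compute the image of the boundary of C and derive a contradiction
  set l : List (Fin n) := (insert a Jf).sort (· ≤ ·) with hldef
  have hnd : l.Nodup := Finset.sort_nodup _ _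
  have hal : a ∈ l := by
    rw [hldef, Finset.mem_sort]
    exact Finset.mem_insert_self a _
  obtain ⟨k, hk, hka⟩ := List.mem_iff_getElem.mp hal
  have hterm : ∀ k' : Fin l.length, (k' : ℕ) ≠ k →
      ExteriorAlgebra.map f (eProd K (l.eraseIdx (k' : ℕ))) = 0 := by
    intro k' hk'
    have hmm : a ∈ l.eraseIdx (k' : ℕ) := by
      rcases lt_or_gt_of_ne (Ne.symm hk') with hlt | hlt
      · have hlen : k < (l.eraseIdx (k' : ℕ)).length := by
          rw [List.length_eraseIdx_of_lt k'.isLt]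
          omega
        have hg := List.getElem_eraseIdx_of_lt (l := l) (i := (k' : ℕ)) (j := k) hlen hlt
        rw [hka] at hg
        exact hg ▸ List.getElem_mem hlen
      · have hlen : k - 1 < (l.eraseIdx (k' : ℕ)).length := by
          rw [List.length_eraseIdx_of_lt k'.isLt]
          omega
        have hg := List.getElem_eraseIdx_of_ge (l := l) (i := (k' : ℕ)) (j := k - 1) hlen (by omega)
        simp only [show k - 1 + 1 = k from by omega] at hg
        rw [hka] at hg
        exact hg ▸ List.getElem_mem hlen
    rw [map_eProd]
    apply List.prod_eq_zero
    refine List.mem_map.mpr ⟨a, hmm, ?_⟩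
    rw [hf]
    have hwa : w a = 0 := if_neg ha
    rw [hwa, map_zero]
  have hmnd : (l.eraseIdx k).Nodup := (List.eraseIdx_sublist l k).nodup hnd
  have ham : a ∉ l.eraseIdx k := by
    intro hamem
    obtain ⟨j, hj, hja⟩ := List.mem_iff_getElem.mp hamem
    by_cases hjk : j < k
    · rw [List.getElem_eraseIdx_of_lt (l := l) (i := k) (j := j) hj hjk] at hja
      have := (hnd.getElem_inj_iff).mp (hja.trans hka.symm)
      omega
    · rw [List.getElem_eraseIdx_of_ge (l := l) (i := k) (j := j) hj (by omega)] at hja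
      have := (hnd.getElem_inj_iff).mp (hja.trans hka.symm)
      omega
  have hmI : ∀ x ∈ l.eraseIdx k, x ∈ I := by
    intro x hx
    have hxl : x ∈ l := (List.eraseIdx_sublist l k).subset hx
    rw [hldef, Finset.mem_sort] at hxl
    rcases Finset.mem_insert.mp hxl with rfl | hxJ
    · exact absurd hx ham
    · rw [← hJf]; exact Finset.mem_coe.mpr hxJ
  have hmFfix : ExteriorAlgebra.map f (eProd K (l.eraseIdx k)) = eProd K (l.eraseIdx k) := by
    rw [map_eProd, eProd]
    congr 1
    apply List.map_congr_left
    intro x hx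
    have hxI := hmI x hx
    rw [hf]
    have hwx : w x = Pi.single x 1 := by
      simp only [w, if_pos (hI.subset hxI)]
      rw [hφfix x hxI]
    rw [hwx]
    rfl
  have hcalc : ExteriorAlgebra.map f (bdryS K (insert a Jf))
      = ((-1 : K) ^ k) • eProd K (l.eraseIdx k) := by
    show ExteriorAlgebra.map f
      (∑ k' : Fin l.length, ((-1 : K) ^ (k' : ℕ)) • eProd K (l.eraseIdx (k' : ℕ))) = _
    rw [map_sum, Finset.sum_eq_single (⟨k, hk⟩ : Fin l.length)]
    · show ExteriorAlgebra.map f (((-1 : K) ^ k) • eProd K (l.eraseIdx k)) = _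
      rw [map_smul, hmFfix]
    · intro b _ hb
      rw [map_smul, hterm b (fun hbk => hb (Fin.ext hbk)), smul_zero]
    · intro h
      exact absurd (Finset.mem_univ _) h
  rw [hF0] at hcalc
  have hnz : ((-1 : K) ^ k) ≠ 0 := pow_ne_zero k (neg_ne_zero.mpr one_ne_zero)
  have hzero := (smul_eq_zero.mp hcalc.symm).resolve_left hnz
  exact eProd_ne_zero hmnd hzero
end

section
/- If a simple matroid G on [n] with n > rk(G) has a basis B each of whose two-element subsets is closed in G, then G is not line-closed (and hence A(G) is not quadratic). -/
/-- If a simple matroid on `[n]` of rank less than `n` (i.e. a basis has fewer than `n`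
elements) has a basis each of whose two-element subsets is closed, then the matroid is
not line-closed. -/
theorem not_lineClosed_of_base_pairs_closed {n : ℕ} (M : Matroid (Fin n))
    (hE : M.E = Set.univ) (hsimple : ∀ i j : Fin n, i ≠ j → M.Indep {i, j})
    (B : Set (Fin n)) (hB : M.IsBase B) (hcard : B.ncard < n)
    (hpairs : ∀ i ∈ B, ∀ j ∈ B, M.closure {i, j} = {i, j}) :
    ¬ ∀ S : Set (Fin n), IsLineClosed M S → M.closure S = S := by
  intro h
  have hlc : IsLineClosed M B := by
    intro i hi j hj
    rw [hpairs i hi j hj]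
    exact Set.insert_subset hi (Set.singleton_subset_iff.2 hj)
  have h1 := h B hlc
  rw [hB.closure_eq, hE] at h1
  have : B.ncard = n := by
    rw [← h1, Set.ncard_univ, Nat.card_eq_fintype_card, Fintype.card_fin]
  omega
end

section
/- If a matroid G on [n] has a basis B whose line-closure ℓc(B) equals [n], then G is taut: G is not a quotient of any matroid G' ≠ G on [n] having the same points and lines as G (i.e., with the same rank-3 truncation). -/
/-- `M` is a quotient of `M'` if every closed set of `M` is closed in `M'`. -/
def IsQuotientOf {n : ℕ} (M M' : Matroid (Fin n)) : Prop :=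
  ∀ F : Set (Fin n), M.closure F = F → M'.closure F = F

/-- `M` and `M'` have the same points and lines, i.e. the same rank-3 truncations:
they have the same dependent sets of size at most 3. -/
def SamePointsAndLines {n : ℕ} (M M' : Matroid (Fin n)) : Prop :=
  ∀ S : Set (Fin n), S.ncard ≤ 3 → (M.Dep S ↔ M'.Dep S)

section Aux

variable {n : ℕ} {M M' : Matroid (Fin n)}

lemma quotient_closure_subset (hE : M.E = Set.univ) (hQ : IsQuotientOf M M')
    (X : Set (Fin n)) : M'.closure X ⊆ M.closure X := by
  have h1 : M'.closure (M.closure X) = M.closure X := hQ _ (M.closure_closure X)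
  calc M'.closure X ⊆ M'.closure (M.closure X) :=
        M'.closure_subset_closure (M.subset_closure X (by rw [hE]; exact Set.subset_univ _))
    _ = M.closure X := h1

lemma indep_of_quotient (hE : M.E = Set.univ) (hE' : M'.E = Set.univ)
    (hQ : IsQuotientOf M M') {I : Set (Fin n)} (hI : M.Indep I) : M'.Indep I := by
  rw [Matroid.indep_iff_forall_notMem_closure_diff (by rw [hE']; exact Set.subset_univ _)]
  intro e heI hecl
  exact hI.notMem_closure_diff_of_mem heI (quotient_closure_subset hE hQ _ hecl)

lemma indep_iff_of_pl (hE : M.E = Set.univ) (hE' : M'.E = Set.univ)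
    (hPL : SamePointsAndLines M M') {S : Set (Fin n)} (hS : S.ncard ≤ 3) :
    M.Indep S ↔ M'.Indep S := by
  have h1 : M.Dep S ↔ M'.Dep S := hPL S hS
  rw [Matroid.dep_iff, Matroid.dep_iff, hE, hE'] at h1
  simp only [Set.subset_univ, and_true] at h1
  exact not_iff_not.mp h1

lemma closure_eq_of_indep_of_ncard_le_two (hE : M.E = Set.univ) (hE' : M'.E = Set.univ)
    (hPL : SamePointsAndLines M M') {I : Set (Fin n)} (hI : M.Indep I)
    (hIc : I.ncard ≤ 2) : M.closure I = M'.closure I := by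
  have hI' : M'.Indep I := (indep_iff_of_pl hE hE' hPL (hIc.trans (by norm_num))).mp hI
  ext x
  rw [hI.mem_closure_iff, hI'.mem_closure_iff]
  have h3 : (insert x I).ncard ≤ 3 :=
    (Set.ncard_insert_le x I).trans (by omega)
  exact or_congr_left (hPL _ h3)

lemma closure_eq_of_ncard_le_two (hE : M.E = Set.univ) (hE' : M'.E = Set.univ)
    (hPL : SamePointsAndLines M M') {S : Set (Fin n)} (hS : S.ncard ≤ 2) :
    M.closure S = M'.closure S := by
  obtain ⟨I, hI⟩ := M.exists_isBasis S (by rw [hE]; exact Set.subset_univ _)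
  have hIc : I.ncard ≤ 2 := (Set.ncard_le_ncard hI.subset S.toFinite).trans hS
  have hI' : M'.Indep I := (indep_iff_of_pl hE hE' hPL (hIc.trans (by norm_num))).mp hI.indep
  have hBasis' : M'.IsBasis I S := by
    refine hI'.isBasis_of_subset_of_subset_closure hI.subset ?_
    intro y hy
    by_cases hyI : y ∈ I
    · exact M'.subset_closure I (by rw [hE']; exact Set.subset_univ _) hyI
    · have hyc : y ∈ M.closure I := by
        rw [hI.closure_eq_closure]
        exact M.subset_closure S (by rw [hE]; exact Set.subset_univ _) hy
      have hdep : M.Dep (insert y I) := by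
        rcases hI.indep.mem_closure_iff.mp hyc with h | h
        · exact h
        · exact absurd h hyI
      have hdep' : M'.Dep (insert y I) :=
        (hPL _ ((Set.ncard_insert_le y I).trans (by omega))).mp hdep
      exact hI'.mem_closure_iff.mpr (Or.inl hdep')
  rw [← hI.closure_eq_closure, ← hBasis'.closure_eq_closure]
  exact closure_eq_of_indep_of_ncard_le_two hE hE' hPL hI.indep hIc

end Aux

/-- If a matroid `M` on `[n]` has a basis whose line-closure is all of `[n]`, then `M`
is taut: it is not a quotient of any matroid `M' ≠ M` with the same points and lines. -/
theorem taut_of_base_lineClosure_univ {n : ℕ} (M : Matroid (Fin n))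
    (hE : M.E = Set.univ) (B : Set (Fin n)) (hB : M.IsBase B)
    (hlc : lineClosure M B = Set.univ) :
    ∀ M' : Matroid (Fin n), M'.E = Set.univ → SamePointsAndLines M M' →
      IsQuotientOf M M' → M' = M := by
  intro M' hE' hPL hQ
  have hsubE : ∀ X : Set (Fin n), X ⊆ M.E := fun X => by rw [hE]; exact Set.subset_univ _
  have hsubE' : ∀ X : Set (Fin n), X ⊆ M'.E := fun X => by rw [hE']; exact Set.subset_univ _
  -- B is independent in M'
  have hBi' : M'.Indep B := indep_of_quotient hE hE' hQ hB.indep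
  -- M'.closure B is line-closed for M and contains B, so it contains lineClosure M B = univ
  have hLC : IsLineClosed M (M'.closure B) := by
    intro i hi j hj
    have hpair : ({i, j} : Set (Fin n)).ncard ≤ 2 :=
      (Set.ncard_insert_le i {j}).trans (by simp)
    rw [closure_eq_of_ncard_le_two hE hE' hPL hpair]
    have h1 : ({i, j} : Set (Fin n)) ⊆ M'.closure B := by
      intro x hx; rcases hx with h | h
      · exact h ▸ hi
      · exact (Set.mem_singleton_iff.mp h) ▸ hj
    exact (M'.closure_subset_closure h1).trans (by rw [M'.closure_closure])
  have hspan : Set.univ ⊆ M'.closure B := by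
    rw [← hlc]
    exact Set.sInter_subset_of_mem ⟨M'.subset_closure B (hsubE' B), hLC⟩
  -- B is a base of M'
  have hB' : M'.IsBase B := hBi'.isBase_of_ground_subset_closure (by rw [hE']; exact hspan)
  -- conclude by showing the independent sets coincide
  refine Matroid.ext_indep (hE'.trans hE.symm) fun I hIE => ?_
  constructor
  · intro hI'
    obtain ⟨B₁, hB₁, hIB₁⟩ := hI'.exists_isBase_superset
    obtain ⟨J, hJ⟩ := M.exists_isBasis B₁ (hsubE B₁)
    have hJind' : M'.Indep J := indep_of_quotient hE hE' hQ hJ.indep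
    have hJbase : M.IsBase J := by
      refine hJ.indep.isBase_of_ground_subset_closure ?_
      rw [hJ.closure_eq_closure]
      have h1 : M'.closure B₁ ⊆ M.closure B₁ := quotient_closure_subset hE hQ B₁
      rw [hB₁.closure_eq, hE'] at h1
      rw [hE]; exact h1
    have hcard : B₁.encard = J.encard := by
      rw [hB₁.encard_eq_encard_of_isBase hB', hJbase.encard_eq_encard_of_isBase hB]
    have hJB₁ : J = B₁ :=
      J.toFinite.eq_of_subset_of_encard_le hJ.subset hcard.le
    exact (hJB₁ ▸ hJ.indep).subset hIB₁
  · exact indep_of_quotient hE hE' hQ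
end

section
/- A matroid G is line-closed if and only if for every flat X of G, every basis of X has line-closure equal to X. -/
/-- A matroid is line-closed iff every basis of every flat has line-closure equal to
the flat. -/
theorem lineClosed_iff_basis_lineClosure {n : ℕ} (M : Matroid (Fin n))
    (hE : M.E = Set.univ) :
    (∀ S : Set (Fin n), IsLineClosed M S → M.closure S = S) ↔
    (∀ X : Set (Fin n), M.closure X = X →
      ∀ B : Set (Fin n), M.IsBasis B X → lineClosure M B = X) := by
  have hsub : ∀ B : Set (Fin n), B ⊆ lineClosure M B := by
    intro B x hx T hT
    exact hT.1 hx
  have hlc : ∀ B : Set (Fin n), IsLineClosed M (lineClosure M B) := by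
    intro B i hi j hj x hx T hT
    exact hT.2 i (hi T hT) j (hj T hT) hx
  have hflat_lc : ∀ X : Set (Fin n), M.closure X = X → IsLineClosed M X := by
    intro X hX i hi j hj
    have h1 : M.closure {i, j} ⊆ M.closure X := by
      apply M.closure_subset_closure
      intro z hz
      rcases hz with rfl | rfl
      · exact hi
      · exact hj
    rwa [hX] at h1
  constructor
  · intro h X hX B hB
    apply Set.Subset.antisymm
    · exact Set.sInter_subset_of_mem ⟨hB.subset, hflat_lc X hX⟩
    · have hcl : M.closure (lineClosure M B) = lineClosure M B := h _ (hlc B)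
      have : M.closure B ⊆ M.closure (lineClosure M B) :=
        M.closure_subset_closure (hsub B)
      rw [hcl, hB.closure_eq_closure, hX] at this
      exact this
  · intro h S hS
    obtain ⟨B, hB⟩ := M.exists_isBasis S (by rw [hE]; exact Set.subset_univ S)
    have hBX : M.IsBasis B (M.closure S) := hB.isBasis_closure_right
    have hX : M.closure (M.closure S) = M.closure S := M.closure_closure S
    have hlcB := h _ hX B hBX
    have hS_mem : lineClosure M B ⊆ S :=
      Set.sInter_subset_of_mem ⟨hB.subset, hS⟩
    rw [hlcB] at hS_mem
    exact Set.Subset.antisymm hS_mem (M.subset_closure S (by rw [hE]; exact Set.subset_univ S))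
end
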